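/- Let I = (X, C) be a 3-SAT instance with variables X = {x_1,…,x_{s−1}} and clauses C = {c_1,…,c_m}, each clause containing exactly three literals, and let G_I be the associated graph described below. If the majority game on G_I admits a sufficient control set of size s, then I is satisfiable. -/

import Mathlib

open Finset

/-- The indicator strategy profile `𝟙_S` of a set of players `S`: action `1` (here `true`)
on `S` and `0` (here `false`) elsewhere. -/
def indicator {V : Type*} [DecidableEq V] (S : Finset V) : V → Bool :=
  fun i => decide (i ∈ S)

/-- A finite binary-action game with utilities `u` is super-modular (has increasing
differences) if for every player `i` and profiles `x, y` with `x_{-i} ≥ y_{-i}`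
componentwise, `u_i(1, x_{-i}) − u_i(0, x_{-i}) ≥ u_i(1, y_{-i}) − u_i(0, y_{-i})`. -/
def Supermodular {V : Type*} [DecidableEq V] (u : V → (V → Bool) → ℝ) : Prop :=
  ∀ (i : V) (x y : V → Bool), (∀ j, j ≠ i → y j ≤ x j) →
    u i (Function.update y i true) - u i (Function.update y i false) ≤
      u i (Function.update x i true) - u i (Function.update x i false)

/-- An improvement path from `S` to `T`: a sequence of profiles starting at `𝟙_S` and ending
at `𝟙_T` such that at each step some player `i ∉ S` flips her action (the profile changes
exactly in coordinate `i`) without decreasing her utility. -/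
def IsImprovementPath {V : Type*} [Fintype V] [DecidableEq V]
    (u : V → (V → Bool) → ℝ) (S T : Finset V) : Prop :=
  ∃ (m : ℕ) (x : ℕ → V → Bool),
    x 0 = indicator S ∧ x m = indicator T ∧
    ∀ k < m, ∃ i, i ∉ S ∧
      x (k + 1) = Function.update (x k) i (!(x k i)) ∧
      u i (x k) ≤ u i (x (k + 1))

/-- `S` is a sufficient control set if there is an improvement path from `S` to the whole
player set `V`. -/
def SufficientControlSet {V : Type*} [Fintype V] [DecidableEq V]
    (u : V → (V → Bool) → ℝ) (S : Finset V) : Prop :=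
  IsImprovementPath u S Finset.univ

/-- Utilities of the majority game on a finite simple undirected graph `G`: the utility of
player `i` at profile `x` is the number of neighbors `j` of `i` with `x_j = x_i`. -/
def majU {V : Type*} [Fintype V] [DecidableEq V] (G : SimpleGraph V) [DecidableRel G.Adj] :
    V → (V → Bool) → ℝ :=
  fun i x => ((G.neighborFinset i).filter (fun j => x j = x i)).card

/-- The node set of the graph `G_I` associated to a 3-SAT instance with `v` variables and
`m` clauses: clause nodes `w_j`, variable nodes `y_i` (encoding `x_i` true) and
`ybar_i` (encoding `x_i` false), a tie-breaking node `z`, a set `L` of `3m` leaves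
(one for each literal occurrence, indexed by a clause and a literal slot), and a set `M`
of `m+1` leaves. -/
inductive SatNode (v m : ℕ) where
  | w : Fin m → SatNode v m
  | y : Fin v → SatNode v m
  | ybar : Fin v → SatNode v m
  | z : SatNode v m
  | leafL : Fin m → Fin 3 → SatNode v m
  | leafM : Fin (m + 1) → SatNode v m
  deriving DecidableEq, Fintype

/-- The variable node encoding the `t`-th literal of clause `j`: `y_i` if the literal is
`x_i`, and `ybar_i` if the literal is `¬x_i`.  Here a clause is a function
`c j : Fin 3 → Fin v × Bool`, the literal `(i, true)` standing for `x_i` and `(i, false)`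
for `¬x_i`. -/
def litNode {v m : ℕ} (c : Fin m → Fin 3 → Fin v × Bool) (j : Fin m) (t : Fin 3) :
    SatNode v m :=
  if (c j t).2 then SatNode.y (c j t).1 else SatNode.ybar (c j t).1

/-- One-directional description of the edges of `G_I`: (1) `w_j` is adjacent to `y_i` iff
`x_i` appears in clause `c_j` and to `ybar_i` iff `¬x_i` appears in `c_j`; (2) the leaf of
`L` indexed by `(j,t)` is adjacent exactly to the variable node encoding the `t`-th
literal of clause `j`; (3) `z` is adjacent to every node of `W` and every node of `M`;
(4) `y_i` is adjacent to `ybar_i`. -/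
def satBase {v m : ℕ} (c : Fin m → Fin 3 → Fin v × Bool) :
    SatNode v m → SatNode v m → Bool
  | .w j, .y i => decide (∃ t, c j t = (i, true))
  | .w j, .ybar i => decide (∃ t, c j t = (i, false))
  | .y i, .ybar i' => decide (i = i')
  | .z, .w _ => true
  | .z, .leafM _ => true
  | .leafL j t, a => decide (litNode c j t = a)
  | _, _ => false

/-- The simple graph `G_I` associated to a 3-SAT instance: the symmetrization of
`satBase`. -/
def satGraph {v m : ℕ} (c : Fin m → Fin 3 → Fin v × Bool) : SimpleGraph (SatNode v m) where
  Adj a b := a ≠ b ∧ (satBase c a b = true ∨ satBase c b a = true)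
  symm := ⟨fun _ _ h => ⟨h.1.symm, h.2.symm⟩⟩
  loopless := ⟨fun _ h => h.1 rfl⟩

instance {v m : ℕ} (c : Fin m → Fin 3 → Fin v × Bool) :
    DecidableRel (satGraph c).Adj :=
  fun _ _ => inferInstanceAs (Decidable (_ ∧ _))

/-- The control set associated to an assignment `σ` of the variables: the node `z`,
the nodes `y_i` for variables with `σ_i` true and the nodes `ybar_i` for variables with
`σ_i` false. -/
def ctrlPred {v m : ℕ} (σ : Fin v → Bool) : SatNode v m → Bool
  | .z => true
  | .y i => σ i
  | .ybar i => !σ i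
  | _ => false

section Extract

variable {V : Type*} [Fintype V] [DecidableEq V]

/-- Flipping `i` from `0` to `1` at the profile `𝟙_T` is (weakly) improving in the
majority game. -/
def Good (G : SimpleGraph V) [DecidableRel G.Adj] (T : Finset V) (i : V) : Prop :=
  (G.neighborFinset i).card ≤ 2 * ((G.neighborFinset i).filter (· ∈ T)).card

lemma Good.mono {G : SimpleGraph V} [DecidableRel G.Adj] {T T' : Finset V} {i : V}
    (hg : Good G T i) (h : T ⊆ T') : Good G T' i := by
  refine le_trans hg (Nat.mul_le_mul_left 2 (Finset.card_le_card ?_))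
  intro a ha
  simp only [Finset.mem_filter] at ha ⊢
  exact ⟨ha.1, h ha.2⟩

lemma good_of_improve {G : SimpleGraph V} [DecidableRel G.Adj] {x : V → Bool} {i : V}
    (hxi : x i = false)
    (h : majU G i x ≤ majU G i (Function.update x i true)) :
    Good G (Finset.univ.filter (fun j => x j = true)) i := by
  set N := G.neighborFinset i with hN
  have hne : ∀ j ∈ N, j ≠ i := fun j hj =>
    ((SimpleGraph.mem_neighborFinset G i j).mp hj).ne'
  have h1 : majU G i x = ((N.filter (fun j => x j = false)).card : ℝ) := by
    unfold majU
    simp only [hxi]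
    rfl
  have h2 : majU G i (Function.update x i true) =
      ((N.filter (fun j => x j = true)).card : ℝ) := by
    unfold majU
    norm_cast
    congr 1
    ext j
    simp only [Finset.mem_filter]
    constructor
    · rintro ⟨hj, hx⟩
      rw [Function.update_of_ne (hne j hj), Function.update_self] at hx
      exact ⟨hj, hx⟩
    · rintro ⟨hj, hx⟩
      refine ⟨hj, ?_⟩
      rw [Function.update_of_ne (hne j hj), Function.update_self]
      exact hx
  rw [h1, h2] at h
  have hle : (N.filter (fun j => x j = false)).card ≤ (N.filter (fun j => x j = true)).card := by
    exact_mod_cast h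
  have hsum : (N.filter (fun j => x j = true)).card
      + (N.filter (fun j => x j = false)).card = N.card := by
    have h0 := Finset.card_filter_add_card_filter_not (s := N)
      (p := fun j => x j = true)
    have heqf : N.filter (fun a => ¬ x a = true) = N.filter (fun j => x j = false) := by
      apply Finset.filter_congr; intro j _; simp
    rw [heqf] at h0
    exact h0
  unfold Good
  rw [← hN]
  have heq : N.filter (· ∈ Finset.univ.filter (fun j => x j = true))
      = N.filter (fun j => x j = true) := by
    apply Finset.filter_congr; intro j _; simp
  rw [heq]
  omega

theorem extract (G : SimpleGraph V) [DecidableRel G.Adj]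
    {S : Finset V} (h : SufficientControlSet (majU G) S) :
    ∃ (n : ℕ) (T : ℕ → Finset V), T 0 = S ∧ (∀ x, x ∈ T n) ∧
      ∀ k < n, T (k + 1) = T k ∨
        ∃ i ∉ T k, T (k + 1) = insert i (T k) ∧ Good G (T k) i := by
  classical
  obtain ⟨n, x, hx0, hxn, hstep⟩ := h
  set T : ℕ → Finset V := fun k => S ∪ Finset.univ.filter
      (fun j => ∃ l ∈ Finset.range (k+1), x l j = true) with hT
  have hmem : ∀ (k' : ℕ) (j : V), j ∈ T k' ↔ j ∈ S ∨ ∃ l ≤ k', x l j = true := by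
    intro k' j
    simp [hT, Nat.lt_succ_iff]
  refine ⟨n, T, ?_, ?_, ?_⟩
  · ext j
    rw [hmem]
    constructor
    · rintro (h | ⟨l, hl, hx⟩)
      · exact h
      · have : l = 0 := by omega
        subst this
        rw [hx0] at hx
        simpa [indicator] using hx
    · exact Or.inl
  · intro j
    rw [hmem]
    exact Or.inr ⟨n, le_refl _, by rw [hxn]; simp [indicator]⟩
  · intro k hk
    obtain ⟨i, hiS, hupd, himp⟩ := hstep k hk
    have hxk1 : ∀ j, j ≠ i → x (k+1) j = x k j := fun j hj => by
      rw [hupd]; exact Function.update_of_ne hj _ _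
    cases hxi : x k i with
    | true =>
      left
      ext j
      rw [hmem, hmem]
      constructor
      · rintro (h | ⟨l, hl, hx⟩)
        · exact Or.inl h
        · rcases Nat.lt_or_ge l (k+1) with h' | h'
          · exact Or.inr ⟨l, by omega, hx⟩
          · have hl' : l = k + 1 := by omega
            subst hl'
            by_cases hji : j = i
            · subst hji
              rw [hupd, Function.update_self, hxi] at hx
              simp at hx
            · rw [hxk1 j hji] at hx
              exact Or.inr ⟨k, le_refl _, hx⟩
      · rintro (h | ⟨l, hl, hx⟩)
        · exact Or.inl h
        · exact Or.inr ⟨l, by omega, hx⟩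
    | false =>
      have hval : x (k+1) = Function.update (x k) i true := by
        rw [hupd, hxi]; rfl
      have hTk1 : T (k+1) = insert i (T k) := by
        ext j
        rw [hmem, Finset.mem_insert, hmem]
        constructor
        · rintro (h | ⟨l, hl, hx⟩)
          · exact Or.inr (Or.inl h)
          · rcases Nat.lt_or_ge l (k+1) with h' | h'
            · exact Or.inr (Or.inr ⟨l, by omega, hx⟩)
            · have hl' : l = k + 1 := by omega
              subst hl'
              by_cases hji : j = i
              · exact Or.inl hji
              · rw [hxk1 j hji] at hx
                exact Or.inr (Or.inr ⟨k, le_refl _, hx⟩)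
        · rintro (h | h | ⟨l, hl, hx⟩)
          · subst h
            refine Or.inr ⟨k+1, le_refl _, ?_⟩
            rw [hval, Function.update_self]
          · exact Or.inl h
          · exact Or.inr ⟨l, by omega, hx⟩
      by_cases hiT : i ∈ T k
      · left
        rw [hTk1, Finset.insert_eq_self.mpr hiT]
      · right
        refine ⟨i, hiT, hTk1, ?_⟩
        have hg := good_of_improve (G := G) hxi (by rw [← hval]; exact himp)
        refine hg.mono ?_
        intro j hj
        simp only [Finset.mem_filter, Finset.mem_univ, true_and] at hj
        rw [hmem]
        exact Or.inr ⟨k, le_refl _, hj⟩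

/-- From a path: every non-`S` element that is ever in `T` entered at some step,
at which flipping it was improving. -/
lemma path_entry (G : SimpleGraph V) [DecidableRel G.Adj] {S : Finset V}
    {n : ℕ} {T : ℕ → Finset V} (hT0 : T 0 = S)
    (hstep : ∀ k < n, T (k + 1) = T k ∨
      ∃ i ∉ T k, T (k + 1) = insert i (T k) ∧ Good G (T k) i)
    {a : V} (haS : a ∉ S) (haT : a ∈ T n) :
    ∃ k < n, a ∉ T k ∧ a ∈ T (k + 1) ∧ Good G (T k) a := by
  have key : ∀ N ≤ n, a ∈ T N → ∃ k < N, a ∉ T k ∧ a ∈ T (k + 1) := by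
    intro N
    induction N with
    | zero => intro _ ha; rw [hT0] at ha; exact absurd ha haS
    | succ N ih =>
      intro hN ha
      by_cases haN : a ∈ T N
      · obtain ⟨k, hk, h1, h2⟩ := ih (by omega) haN
        exact ⟨k, by omega, h1, h2⟩
      · exact ⟨N, by omega, haN, ha⟩
  obtain ⟨k, hk, h1, h2⟩ := key n (le_refl _) haT
  rcases hstep k hk with heq | ⟨i, hiT, heq, hgood⟩
  · rw [heq] at h2; exact absurd h2 h1
  · rw [heq, Finset.mem_insert] at h2
    rcases h2 with rfl | h2
    · exact ⟨k, hk, h1, by rw [heq]; exact Finset.mem_insert_self _ _, hgood⟩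
    · exact absurd h2 h1

lemma path_mono (G : SimpleGraph V) [DecidableRel G.Adj]
    {n : ℕ} {T : ℕ → Finset V}
    (hstep : ∀ k < n, T (k + 1) = T k ∨
      ∃ i ∉ T k, T (k + 1) = insert i (T k) ∧ Good G (T k) i)
    {k l : ℕ} (hkl : k ≤ l) (hl : l ≤ n) : T k ⊆ T l := by
  induction l with
  | zero => have : k = 0 := by omega
            subst this; exact Finset.Subset.refl _
  | succ l ih =>
    rcases Nat.lt_or_ge k (l+1) with h | h
    · have h1 : T k ⊆ T l := ih (by omega) (by omega)
      have h2 : T l ⊆ T (l+1) := by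
        rcases hstep l (by omega) with heq | ⟨i, _, heq, _⟩
        · rw [heq]
        · rw [heq]; exact Finset.subset_insert _ _
      exact h1.trans h2
    · have : k = l + 1 := by omega
      subst this; exact Finset.Subset.refl _

end Extract

namespace SatAux

open SatNode Finset

variable {v m : ℕ}

/-- `nodeOf i b` is `y i` if `b` and `ybar i` otherwise. -/
def nodeOf (i : Fin v) (b : Bool) : SatNode v m := if b then .y i else .ybar i

@[simp] lemma nodeOf_true (i : Fin v) : (nodeOf i true : SatNode v m) = .y i := rfl
@[simp] lemma nodeOf_false (i : Fin v) : (nodeOf i false : SatNode v m) = .ybar i := rfl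

lemma nodeOf_inj {i i' : Fin v} {b b' : Bool} :
    (nodeOf i b : SatNode v m) = nodeOf i' b' ↔ i = i' ∧ b = b' := by
  cases b <;> cases b' <;> simp [nodeOf]

variable (c : Fin m → Fin 3 → Fin v × Bool)

lemma litNode_eq (j t) : litNode c j t = nodeOf (c j t).1 (c j t).2 := by
  rw [litNode, nodeOf]

@[simp] lemma litNode_eq_y {j t i} : litNode c j t = .y i ↔ c j t = (i, true) := by
  rcases hjt : c j t with ⟨i', b'⟩
  cases b' <;> simp [litNode, hjt, Prod.ext_iff]

@[simp] lemma litNode_eq_ybar {j t i} : litNode c j t = .ybar i ↔ c j t = (i, false) := by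
  rcases hjt : c j t with ⟨i', b'⟩
  cases b' <;> simp [litNode, hjt, Prod.ext_iff]

@[simp] lemma litNode_eq_w {j t j'} : litNode c j t = .w j' ↔ False := by
  rcases hjt : c j t with ⟨i', b'⟩; cases b' <;> simp [litNode, hjt]

@[simp] lemma litNode_eq_z {j t} : litNode c j t = .z ↔ False := by
  rcases hjt : c j t with ⟨i', b'⟩; cases b' <;> simp [litNode, hjt]

@[simp] lemma litNode_eq_leafL {j t j' t'} : litNode c j t = .leafL j' t' ↔ False := by
  rcases hjt : c j t with ⟨i', b'⟩; cases b' <;> simp [litNode, hjt]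

@[simp] lemma litNode_eq_leafM {j t r} : litNode c j t = .leafM r ↔ False := by
  rcases hjt : c j t with ⟨i', b'⟩; cases b' <;> simp [litNode, hjt]

lemma litNode_eq_nodeOf_iff {j t i b} : litNode c j t = nodeOf i b ↔ c j t = (i, b) := by
  cases b <;> simp

-- satBase computation lemmas
@[simp] lemma sb_w_w (j j') : satBase c (.w j) (.w j') = false := rfl
@[simp] lemma sb_w_y (j i) : satBase c (.w j) (.y i) = decide (∃ t, c j t = (i, true)) := rfl
@[simp] lemma sb_w_ybar (j i) : satBase c (.w j) (.ybar i) = decide (∃ t, c j t = (i, false)) := rfl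
@[simp] lemma sb_w_z (j) : satBase c (.w j) .z = false := rfl
@[simp] lemma sb_w_leafL (j j' t') : satBase c (.w j) (.leafL j' t') = false := rfl
@[simp] lemma sb_w_leafM (j r) : satBase c (.w j) (.leafM r) = false := rfl
@[simp] lemma sb_y_w (i j) : satBase c (.y i) (.w j) = false := rfl
@[simp] lemma sb_y_y (i i') : satBase c (.y i) (.y i') = false := rfl
@[simp] lemma sb_y_ybar (i i') : satBase c (.y i) (.ybar i') = decide (i = i') := rfl
@[simp] lemma sb_y_z (i) : satBase c (.y i) .z = false := rfl
@[simp] lemma sb_y_leafL (i j t) : satBase c (.y i) (.leafL j t) = false := rfl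
@[simp] lemma sb_y_leafM (i r) : satBase c (.y i) (.leafM r) = false := rfl
@[simp] lemma sb_ybar_w (i j) : satBase c (.ybar i) (.w j) = false := rfl
@[simp] lemma sb_ybar_y (i i') : satBase c (.ybar i) (.y i') = false := rfl
@[simp] lemma sb_ybar_ybar (i i') : satBase c (.ybar i) (.ybar i') = false := rfl
@[simp] lemma sb_ybar_z (i) : satBase c (.ybar i) .z = false := rfl
@[simp] lemma sb_ybar_leafL (i j t) : satBase c (.ybar i) (.leafL j t) = false := rfl
@[simp] lemma sb_ybar_leafM (i r) : satBase c (.ybar i) (.leafM r) = false := rfl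
@[simp] lemma sb_z_w (j) : satBase c .z (.w j) = true := rfl
@[simp] lemma sb_z_y (i) : satBase c .z (.y i) = false := rfl
@[simp] lemma sb_z_ybar (i) : satBase c .z (.ybar i) = false := rfl
@[simp] lemma sb_z_z : satBase c .z .z = false := rfl
@[simp] lemma sb_z_leafL (j t) : satBase c .z (.leafL j t) = false := rfl
@[simp] lemma sb_z_leafM (r) : satBase c .z (.leafM r) = true := rfl
@[simp] lemma sb_leafL (j t a) : satBase c (.leafL j t) a = decide (litNode c j t = a) := by
  cases a <;> rfl
@[simp] lemma sb_leafM_w (r j) : satBase c (.leafM r) (.w j) = false := rfl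
@[simp] lemma sb_leafM_y (r i) : satBase c (.leafM r) (.y i) = false := rfl
@[simp] lemma sb_leafM_ybar (r i) : satBase c (.leafM r) (.ybar i) = false := rfl
@[simp] lemma sb_leafM_z (r) : satBase c (.leafM r) .z = false := rfl
@[simp] lemma sb_leafM_leafL (r j t) : satBase c (.leafM r) (.leafL j t) = false := rfl
@[simp] lemma sb_leafM_leafM (r r') : satBase c (.leafM r) (.leafM r') = false := rfl

lemma satAdj_iff (a b : SatNode v m) :
    (satGraph c).Adj a b ↔ a ≠ b ∧ (satBase c a b = true ∨ satBase c b a = true) :=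
  Iff.rfl

/-- clauses containing the literal `(i, b)` -/
def Aset (i : Fin v) (b : Bool) : Finset (Fin m) :=
  univ.filter (fun j => ∃ t, c j t = (i, b))

/-- literal-occurrence slots carrying the literal `(i, b)` -/
def Bset (i : Fin v) (b : Bool) : Finset (Fin m × Fin 3) :=
  univ.filter (fun p => c p.1 p.2 = (i, b))

lemma card_Bset (hc : ∀ j, Function.Injective (fun t => (c j t).1)) (i b) :
    (Bset c i b).card = (Aset c i b).card := by
  refine Finset.card_bij (fun p _ => p.1) ?_ ?_ ?_
  · intro p hp
    simp only [Bset, mem_filter, mem_univ, true_and] at hp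
    simp only [Aset, mem_filter, mem_univ, true_and]
    exact ⟨p.2, hp⟩
  · intro p hp q hq h
    have h' : p.1 = q.1 := h
    simp only [Bset, mem_filter, mem_univ, true_and] at hp hq
    have h2 : (c p.1 p.2).1 = (c p.1 q.2).1 := by rw [hp, h', hq]
    exact Prod.ext h' (hc p.1 h2)
  · intro j hj
    simp only [Aset, mem_filter, mem_univ, true_and] at hj
    obtain ⟨t, ht⟩ := hj
    exact ⟨(j, t), by simp [Bset, ht], rfl⟩

lemma nbhd_leafL (j t) :
    (satGraph c).neighborFinset (.leafL j t) = {litNode c j t} := by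
  ext x
  rw [SimpleGraph.mem_neighborFinset, satAdj_iff]
  cases x <;> simp [eq_comm]

lemma nbhd_leafM (r) :
    (satGraph c).neighborFinset (.leafM r : SatNode v m) = {.z} := by
  ext x
  rw [SimpleGraph.mem_neighborFinset, satAdj_iff]
  cases x <;> simp

lemma nbhd_z :
    (satGraph c).neighborFinset .z =
      (univ.image SatNode.w) ∪ (univ.image (SatNode.leafM : Fin (m+1) → SatNode v m)) := by
  ext x
  rw [SimpleGraph.mem_neighborFinset, satAdj_iff]
  cases x <;> simp [eq_comm]

lemma nbhd_w (j) :
    (satGraph c).neighborFinset (.w j) =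
      insert SatNode.z ((univ : Finset (Fin 3)).image (litNode c j)) := by
  ext x
  rw [SimpleGraph.mem_neighborFinset, satAdj_iff]
  cases x with
  | w j' => simp
  | y i => simp [litNode_eq_y, eq_comm (a := SatNode.y i)]
  | ybar i => simp [litNode_eq_ybar, eq_comm (a := SatNode.ybar i)]
  | z => simp
  | leafL j' t' => simp [eq_comm]
  | leafM r => simp

lemma nbhd_nodeOf (i b) :
    (satGraph c).neighborFinset (nodeOf i b) =
      insert (nodeOf i (!b))
        ((Aset c i b).image SatNode.w ∪
          (Bset c i b).image (fun p => SatNode.leafL p.1 p.2)) := by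
  ext x
  rw [SimpleGraph.mem_neighborFinset, satAdj_iff]
  cases b <;> cases x <;> simp [Aset, Bset] <;> exact eq_comm

lemma w_injective : Function.Injective (SatNode.w : Fin m → SatNode v m) := by
  intro a b h; injection h

lemma leafL_injective :
    Function.Injective (fun p : Fin m × Fin 3 => (SatNode.leafL p.1 p.2 : SatNode v m)) := by
  intro p q h
  injection h with h1 h2
  exact Prod.ext h1 h2

lemma card_nbhd_nodeOf (hc : ∀ j, Function.Injective (fun t => (c j t).1)) (i b) :
    ((satGraph c).neighborFinset (nodeOf i b)).card = 2 * (Aset c i b).card + 1 := by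
  have hd : Disjoint ((Aset c i b).image SatNode.w : Finset (SatNode v m))
      ((Bset c i b).image (fun p => SatNode.leafL p.1 p.2)) := by
    rw [Finset.disjoint_left]
    intro a ha hb
    simp only [Finset.mem_image] at ha hb
    obtain ⟨j, _, rfl⟩ := ha
    obtain ⟨p, _, h⟩ := hb
    exact absurd h (by simp)
  have hm : (nodeOf i (!b) : SatNode v m) ∉
      (Aset c i b).image SatNode.w ∪ (Bset c i b).image (fun p => SatNode.leafL p.1 p.2) := by
    cases b <;> simp
  rw [nbhd_nodeOf, Finset.card_insert_of_notMem hm, Finset.card_union_of_disjoint hd,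
    Finset.card_image_of_injective _ w_injective, Finset.card_image_of_injective _ leafL_injective,
    card_Bset c hc]
  ring

lemma good_leafL {T : Finset (SatNode v m)} {j t}
    (hg : Good (satGraph c) T (.leafL j t)) : litNode c j t ∈ T := by
  unfold Good at hg
  rw [nbhd_leafL] at hg
  by_contra hlit
  rw [Finset.filter_singleton] at hg
  simp [hlit] at hg

lemma good_leafM {T : Finset (SatNode v m)} {r}
    (hg : Good (satGraph c) T (.leafM r)) : (SatNode.z : SatNode v m) ∈ T := by
  unfold Good at hg
  rw [nbhd_leafM] at hg
  by_contra hz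
  rw [Finset.filter_singleton] at hg
  simp [hz] at hg

lemma good_z {T : Finset (SatNode v m)}
    (hM : ∀ r : Fin (m+1), (SatNode.leafM r : SatNode v m) ∉ T)
    (hg : Good (satGraph c) T .z) : False := by
  unfold Good at hg
  rw [nbhd_z] at hg
  have hdisj : Disjoint ((univ : Finset (Fin m)).image (SatNode.w : Fin m → SatNode v m))
      ((univ : Finset (Fin (m+1))).image SatNode.leafM) := by
    rw [Finset.disjoint_left]
    intro a ha hb
    simp only [Finset.mem_image] at ha hb
    obtain ⟨j, _, rfl⟩ := ha
    obtain ⟨r, _, h⟩ := hb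
    exact absurd h (by simp)
  have hdeg : (((univ : Finset (Fin m)).image (SatNode.w : Fin m → SatNode v m)) ∪
      ((univ : Finset (Fin (m+1))).image SatNode.leafM)).card = m + (m+1) := by
    rw [Finset.card_union_of_disjoint hdisj,
      Finset.card_image_of_injective _ w_injective,
      Finset.card_image_of_injective _ (fun a b h => by injection h)]
    simp
  have hsub : ((((univ : Finset (Fin m)).image (SatNode.w : Fin m → SatNode v m)) ∪
      ((univ : Finset (Fin (m+1))).image SatNode.leafM)).filter (· ∈ T)) ⊆
      (univ : Finset (Fin m)).image SatNode.w := by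
    intro a ha
    simp only [Finset.mem_filter, Finset.mem_union] at ha
    rcases ha with ⟨h1 | h1, haT⟩
    · exact h1
    · simp only [Finset.mem_image] at h1
      obtain ⟨r, _, rfl⟩ := h1
      exact absurd haT (hM r)
  have h1 := (Finset.card_le_card hsub).trans Finset.card_image_le
  simp only [Finset.card_univ, Fintype.card_fin] at h1
  omega

lemma good_w (hc : ∀ j, Function.Injective (fun t => (c j t).1))
    {T : Finset (SatNode v m)} {j}
    (hg : Good (satGraph c) T (.w j)) : ∃ t, litNode c j t ∈ T := by
  by_contra h
  push_neg at h
  unfold Good at hg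
  rw [nbhd_w] at hg
  have hinj : Function.Injective (litNode c j) := by
    intro t t' ht
    rw [litNode_eq, litNode_eq, nodeOf_inj] at ht
    exact hc j ht.1
  have hdeg : (insert SatNode.z ((univ : Finset (Fin 3)).image (litNode c j))).card = 4 := by
    rw [Finset.card_insert_of_notMem (by simp), Finset.card_image_of_injective _ hinj]
    simp
  have hsub : ((insert SatNode.z ((univ : Finset (Fin 3)).image (litNode c j))).filter
      (· ∈ T)) ⊆ {SatNode.z} := by
    intro a ha
    simp only [Finset.mem_filter, Finset.mem_insert, Finset.mem_image] at ha
    rcases ha with ⟨rfl | ⟨t, _, rfl⟩, haT⟩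
    · simp
    · exact absurd haT (h t)
  have h1 := Finset.card_le_card hsub
  simp only [Finset.card_singleton] at h1
  omega

lemma good_var_partner (hc : ∀ j, Function.Injective (fun t => (c j t).1))
    {T : Finset (SatNode v m)} {i b}
    (hpartner : (nodeOf i (!b) : SatNode v m) ∉ T)
    (hleaves : ∀ p : Fin m × Fin 3, c p.1 p.2 = (i, b) →
      (SatNode.leafL p.1 p.2 : SatNode v m) ∉ T)
    (hg : Good (satGraph c) T (nodeOf i b)) : False := by
  unfold Good at hg
  rw [card_nbhd_nodeOf c hc, nbhd_nodeOf] at hg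
  have hsub : ((insert (nodeOf i (!b))
      ((Aset c i b).image SatNode.w ∪
        (Bset c i b).image (fun p => SatNode.leafL p.1 p.2))).filter (· ∈ T)) ⊆
      (Aset c i b).image SatNode.w := by
    intro a ha
    simp only [Finset.mem_filter, Finset.mem_insert, Finset.mem_union,
      Finset.mem_image] at ha
    rcases ha with ⟨rfl | ⟨j, hj, rfl⟩ | ⟨p, hp, rfl⟩, haT⟩
    · exact absurd haT hpartner
    · exact Finset.mem_image_of_mem _ hj
    · have hcp : c p.1 p.2 = (i, b) := by
        simpa [Bset] using hp
      exact absurd haT (hleaves p hcp)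
  have h1 := Finset.card_le_card hsub
  rw [Finset.card_image_of_injective _ w_injective] at h1
  omega

lemma good_var_wj (hc : ∀ j, Function.Injective (fun t => (c j t).1))
    {T : Finset (SatNode v m)} {i b} {j0 : Fin m}
    (hj0 : ∃ r, c j0 r = (i, b)) (hw : (SatNode.w j0 : SatNode v m) ∉ T)
    (hleaves : ∀ p : Fin m × Fin 3, c p.1 p.2 = (i, b) →
      (SatNode.leafL p.1 p.2 : SatNode v m) ∉ T)
    (hg : Good (satGraph c) T (nodeOf i b)) : False := by
  unfold Good at hg
  rw [card_nbhd_nodeOf c hc, nbhd_nodeOf] at hg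
  have hj0A : j0 ∈ Aset c i b := by
    simp only [Aset, Finset.mem_filter, Finset.mem_univ, true_and]
    exact hj0
  have hsub : ((insert (nodeOf i (!b))
      ((Aset c i b).image SatNode.w ∪
        (Bset c i b).image (fun p => SatNode.leafL p.1 p.2))).filter (· ∈ T)) ⊆
      insert (nodeOf i (!b)) (((Aset c i b).erase j0).image SatNode.w) := by
    intro a ha
    simp only [Finset.mem_filter, Finset.mem_insert, Finset.mem_union,
      Finset.mem_image] at ha ⊢
    rcases ha with ⟨rfl | ⟨j, hj, rfl⟩ | ⟨p, hp, rfl⟩, haT⟩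
    · exact Or.inl rfl
    · refine Or.inr ⟨j, Finset.mem_erase.mpr ⟨?_, hj⟩, rfl⟩
      rintro rfl
      exact hw haT
    · have hcp : c p.1 p.2 = (i, b) := by
        simpa [Bset] using hp
      exact absurd haT (hleaves p hcp)
  have h1 := Finset.card_le_card hsub
  have h2 : (insert (nodeOf i (!b)) (((Aset c i b).erase j0).image SatNode.w)).card ≤
      1 + ((Aset c i b).erase j0).card := by
    refine (Finset.card_insert_le _ _).trans ?_
    rw [Finset.card_image_of_injective _ w_injective]
    omega
  rw [Finset.card_erase_of_mem hj0A] at h2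
  have ha1 : 1 ≤ (Aset c i b).card := Finset.card_pos.mpr ⟨j0, hj0A⟩
  omega

/-- membership predicate for the "private set" of variable `i`:
`y i`, `ybar i` and all leaves attached to them. -/
def inP (i : Fin v) : SatNode v m → Bool
  | .y i' => i' == i
  | .ybar i' => i' == i
  | .leafL j t => (c j t).1 == i
  | _ => false

@[simp] lemma inP_w (i : Fin v) (j : Fin m) : inP c i (.w j) = false := rfl
@[simp] lemma inP_y (i i' : Fin v) : inP c i (.y i') = (i' == i) := rfl
@[simp] lemma inP_ybar (i i' : Fin v) : inP c i (.ybar i') = (i' == i) := rfl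
@[simp] lemma inP_z (i : Fin v) : inP c i (.z : SatNode v m) = false := rfl
@[simp] lemma inP_leafL (i : Fin v) (j t) : inP c i (.leafL j t) = ((c j t).1 == i) := rfl
@[simp] lemma inP_leafM (i : Fin v) (r) : inP c i (.leafM r : SatNode v m) = false := rfl

def Pset (i : Fin v) : Finset (SatNode v m) := univ.filter (fun x => inP c i x = true)

/-- membership predicate for `{z} ∪ M`. -/
def inQ : SatNode v m → Bool
  | .z => true
  | .leafM _ => true
  | _ => false

@[simp] lemma inQ_w (j : Fin m) : inQ (.w j : SatNode v m) = false := rfl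
@[simp] lemma inQ_y (i : Fin v) : inQ (.y i : SatNode v m) = false := rfl
@[simp] lemma inQ_ybar (i : Fin v) : inQ (.ybar i : SatNode v m) = false := rfl
@[simp] lemma inQ_z : inQ (.z : SatNode v m) = true := rfl
@[simp] lemma inQ_leafL (j t) : inQ (.leafL j t : SatNode v m) = false := rfl
@[simp] lemma inQ_leafM (r) : inQ (.leafM r : SatNode v m) = true := rfl

def Qset : Finset (SatNode v m) := univ.filter (fun x => inQ x = true)

lemma PQ_disjoint (i : Fin v) : Disjoint (Pset c i) (Qset : Finset (SatNode v m)) := by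
  rw [Finset.disjoint_left]
  intro a haP haQ
  cases a <;> simp [Pset, Qset] at haP haQ

lemma PP_disjoint {i i' : Fin v} (h : i ≠ i') :
    Disjoint (Pset c i) (Pset c i') := by
  rw [Finset.disjoint_left]
  intro a haP haQ
  cases a <;> simp [Pset] at haP haQ <;> exact h (haP.symm.trans haQ)

/-- generic counting lemma: `card ι` pairwise disjoint sets all meeting `S`, with
`|S| = card ι`, meet `S` in exactly one element each, and cover `S`. -/
lemma count_lemma {ι α : Type*} [Fintype ι] [DecidableEq ι] [DecidableEq α]
    (F : ι → Finset α) (S : Finset α)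
    (hdisj : ∀ o o' : ι, o ≠ o' → Disjoint (F o) (F o'))
    (hne : ∀ o, (F o ∩ S).Nonempty)
    (hcard : S.card = Fintype.card ι) :
    (∀ o, (F o ∩ S).card = 1) ∧ ∀ x ∈ S, ∃ o, x ∈ F o := by
  classical
  have hdisj2 : ∀ o ∈ (univ : Finset ι), ∀ o' ∈ (univ : Finset ι), o ≠ o' →
      Disjoint (F o ∩ S) (F o' ∩ S) := fun o _ o' _ h =>
    (hdisj o o' h).mono Finset.inter_subset_left Finset.inter_subset_left
  have hcardU : ((univ : Finset ι).biUnion (fun o => F o ∩ S)).card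
      = ∑ o, (F o ∩ S).card := Finset.card_biUnion hdisj2
  have hsubS : (univ : Finset ι).biUnion (fun o => F o ∩ S) ⊆ S := by
    intro x hx
    simp only [Finset.mem_biUnion] at hx
    obtain ⟨o, _, hx⟩ := hx
    exact (Finset.mem_inter.mp hx).2
  have hle : ∑ o, (F o ∩ S).card ≤ Fintype.card ι := by
    calc ∑ o, (F o ∩ S).card = _ := hcardU.symm
      _ ≤ S.card := Finset.card_le_card hsubS
      _ = _ := hcard
  have hge : ∀ o, 1 ≤ (F o ∩ S).card := fun o => Finset.card_pos.mpr (hne o)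
  have hsum_ge : Fintype.card ι ≤ ∑ o, (F o ∩ S).card := by
    calc Fintype.card ι = ∑ _o : ι, 1 := by simp
      _ ≤ _ := Finset.sum_le_sum (fun o _ => hge o)
  have hone : ∀ o, (F o ∩ S).card = 1 := by
    intro o
    by_contra hcon
    have h2 : 2 ≤ (F o ∩ S).card := by
      have := hge o; omega
    have hsplit : (F o ∩ S).card + ∑ o' ∈ (univ : Finset ι).erase o, (F o' ∩ S).card
        = ∑ o', (F o' ∩ S).card :=
      Finset.add_sum_erase (univ : Finset ι) (fun o' => (F o' ∩ S).card) (Finset.mem_univ o)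
    have hrest : ((univ : Finset ι).erase o).card ≤
        ∑ o' ∈ (univ : Finset ι).erase o, (F o' ∩ S).card := by
      rw [Finset.card_eq_sum_ones]
      exact Finset.sum_le_sum (fun o' _ => hge o')
    have hcnt : ((univ : Finset ι).erase o).card = Fintype.card ι - 1 := by
      rw [Finset.card_erase_of_mem (Finset.mem_univ o), Finset.card_univ]
    have hflt : 0 < Fintype.card ι := Fintype.card_pos_iff.mpr ⟨o⟩
    omega
  refine ⟨hone, ?_⟩
  have hcards : S.card ≤ ((univ : Finset ι).biUnion (fun o => F o ∩ S)).card := by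
    rw [hcardU, hcard]
    exact hsum_ge
  have hSeq := Finset.eq_of_subset_of_card_le hsubS hcards
  intro x hx
  rw [← hSeq] at hx
  simp only [Finset.mem_biUnion] at hx
  obtain ⟨o, _, hx⟩ := hx
  exact ⟨o, (Finset.mem_inter.mp hx).1⟩

section Path

variable {S : Finset (SatNode v m)} {n : ℕ} {T : ℕ → Finset (SatNode v m)}

lemma leaf_stays (hT0 : T 0 = S)
    (hstep : ∀ k < n, T (k + 1) = T k ∨
      ∃ i ∉ T k, T (k + 1) = insert i (T k) ∧ Good (satGraph c) (T k) i)
    {j t} (hS : (SatNode.leafL j t : SatNode v m) ∉ S) :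
    ∀ k ≤ n, (SatNode.leafL j t : SatNode v m) ∈ T k → litNode c j t ∈ T k := by
  intro k
  induction k with
  | zero =>
    intro _ h
    rw [hT0] at h
    exact absurd h hS
  | succ k ih =>
    intro hk h
    rcases hstep k (by omega) with heq | ⟨i, hiT, heq, hgood⟩
    · rw [heq] at h ⊢
      exact ih (by omega) h
    · rw [heq] at h ⊢
      rcases Finset.mem_insert.mp h with hcase | hcase
      · rw [← hcase] at hgood
        exact Finset.mem_insert_of_mem (good_leafL c hgood)
      · exact Finset.mem_insert_of_mem (ih (by omega) hcase)

lemma Q_nonempty (hT0 : T 0 = S) (hTn : ∀ x, x ∈ T n)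
    (hstep : ∀ k < n, T (k + 1) = T k ∨
      ∃ i ∉ T k, T (k + 1) = insert i (T k) ∧ Good (satGraph c) (T k) i) :
    ((Qset : Finset (SatNode v m)) ∩ S).Nonempty := by
  by_contra hQ
  have hQ' : ∀ x ∈ (Qset : Finset (SatNode v m)), x ∉ S := by
    intro x hx hxS
    exact hQ ⟨x, Finset.mem_inter.mpr ⟨hx, hxS⟩⟩
  have inv : ∀ k ≤ n, (SatNode.z : SatNode v m) ∉ T k ∧
      ∀ r, (SatNode.leafM r : SatNode v m) ∉ T k := by
    intro k
    induction k with
    | zero =>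
      intro _
      rw [hT0]
      exact ⟨hQ' _ (by simp [Qset]), fun r => hQ' _ (by simp [Qset])⟩
    | succ k ih =>
      intro hk
      obtain ⟨ihz, ihM⟩ := ih (by omega)
      rcases hstep k (by omega) with heq | ⟨i, hiT, heq, hgood⟩
      · rw [heq]
        exact ⟨ihz, ihM⟩
      · rw [heq]
        refine ⟨fun hmem => ?_, fun r hmem => ?_⟩
        · rcases Finset.mem_insert.mp hmem with hcase | hcase
          · rw [← hcase] at hgood
            exact good_z c ihM hgood
          · exact ihz hcase
        · rcases Finset.mem_insert.mp hmem with hcase | hcase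
          · rw [← hcase] at hgood
            exact ihz (good_leafM c hgood)
          · exact ihM r hcase
  exact (inv n (le_refl n)).1 (hTn _)

lemma P_nonempty (hc : ∀ j, Function.Injective (fun t => (c j t).1))
    (hT0 : T 0 = S) (hTn : ∀ x, x ∈ T n)
    (hstep : ∀ k < n, T (k + 1) = T k ∨
      ∃ i ∉ T k, T (k + 1) = insert i (T k) ∧ Good (satGraph c) (T k) i)
    (i : Fin v) : ((Pset c i) ∩ S).Nonempty := by
  by_contra hP
  have hP' : ∀ x ∈ Pset c i, x ∉ S := by
    intro x hx hxS
    exact hP ⟨x, Finset.mem_inter.mpr ⟨hx, hxS⟩⟩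
  have inv : ∀ k ≤ n, (SatNode.y i : SatNode v m) ∉ T k ∧
      (SatNode.ybar i : SatNode v m) ∉ T k ∧
      ∀ p : Fin m × Fin 3, (c p.1 p.2).1 = i →
        (SatNode.leafL p.1 p.2 : SatNode v m) ∉ T k := by
    intro k
    induction k with
    | zero =>
      intro _
      rw [hT0]
      exact ⟨hP' _ (by simp [Pset]), hP' _ (by simp [Pset]),
        fun p hp => hP' _ (by simp [Pset, hp])⟩
    | succ k ih =>
      intro hk
      obtain ⟨ihy, ihybar, ihleaf⟩ := ih (by omega)
      rcases hstep k (by omega) with heq | ⟨i0, hiT, heq, hgood⟩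
      · rw [heq]
        exact ⟨ihy, ihybar, ihleaf⟩
      · rw [heq]
        have hvar : ∀ b : Bool, (nodeOf i b : SatNode v m) = i0 → False := by
          intro b hb
          rw [← hb] at hgood
          refine good_var_partner c hc ?_ ?_ hgood
          · cases b
            · simpa using ihy
            · simpa using ihybar
          · intro p hp
            exact ihleaf p (by rw [hp])
        refine ⟨fun hmem => ?_, fun hmem => ?_, fun p hp hmem => ?_⟩
        · rcases Finset.mem_insert.mp hmem with hcase | hcase
          · exact hvar true hcase
          · exact ihy hcase
        · rcases Finset.mem_insert.mp hmem with hcase | hcase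
          · exact hvar false hcase
          · exact ihybar hcase
        · rcases Finset.mem_insert.mp hmem with hcase | hcase
          · rw [← hcase] at hgood
            have hlit := good_leafL c hgood
            rw [litNode_eq] at hlit
            cases hb2 : (c p.1 p.2).2
            · rw [hp, hb2] at hlit
              exact ihybar (by simpa using hlit)
            · rw [hp, hb2] at hlit
              exact ihy (by simpa using hlit)
          · exact ihleaf p hp hcase
  exact (inv n (le_refl n)).1 (hTn _)

lemma before_excl
    (hstep : ∀ k < n, T (k + 1) = T k ∨
      ∃ i ∉ T k, T (k + 1) = insert i (T k) ∧ Good (satGraph c) (T k) i)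
    {a b : SatNode v m}
    (h1 : ∃ k ≤ n, a ∈ T k ∧ b ∉ T k) : ¬ ∃ k ≤ n, b ∈ T k ∧ a ∉ T k := by
  rintro ⟨k2, hk2, hb2, ha2⟩
  obtain ⟨k1, hk1, ha1, hb1⟩ := h1
  rcases le_total k1 k2 with h | h
  · exact ha2 (path_mono (satGraph c) hstep h hk2 ha1)
  · exact hb1 (path_mono (satGraph c) hstep h hk1 hb2)

/-- Key ordering lemma: if a literal node is present in `T` while one of its clause
nodes is still absent, then that literal node entered strictly before its partner. -/
lemma L1 (hc : ∀ j, Function.Injective (fun t => (c j t).1))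
    (hT0 : T 0 = S) (hTn : ∀ x, x ∈ T n)
    (hstep : ∀ k < n, T (k + 1) = T k ∨
      ∃ i ∉ T k, T (k + 1) = insert i (T k) ∧ Good (satGraph c) (T k) i)
    (hPone : ∀ i, ((Pset c i) ∩ S).card = 1)
    {i : Fin v} {b : Bool} {k0 : ℕ} {j0 : Fin m} (hk0 : k0 ≤ n)
    (hν : (nodeOf i b : SatNode v m) ∈ T k0)
    (hj0 : ∃ r, c j0 r = (i, b)) (hw : (SatNode.w j0 : SatNode v m) ∉ T k0) :
    ∃ k ≤ n, (nodeOf i b : SatNode v m) ∈ T k ∧ (nodeOf i (!b) : SatNode v m) ∉ T k := by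
  by_contra H
  push_neg at H
  obtain ⟨s0, hs0⟩ := Finset.card_eq_one.mp (hPone i)
  have hmem_s : ∀ x, x ∈ Pset c i → x ∈ S → x = s0 := by
    intro x h1 h2
    have hx : x ∈ Pset c i ∩ S := Finset.mem_inter.mpr ⟨h1, h2⟩
    rw [hs0] at hx
    simpa using hx
  have hνP : (nodeOf i b : SatNode v m) ∈ Pset c i := by
    cases b <;> simp [Pset]
  have hν'P : (nodeOf i (!b) : SatNode v m) ∈ Pset c i := by
    cases b <;> simp [Pset]
  have hnedf : (nodeOf i b : SatNode v m) ≠ nodeOf i (!b) := by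
    cases b <;> simp [nodeOf]
  have hνS : (nodeOf i b : SatNode v m) ∉ S := by
    intro hin
    have h1 : (nodeOf i (!b) : SatNode v m) ∈ T 0 :=
      H 0 (Nat.zero_le n) (by rw [hT0]; exact hin)
    rw [hT0] at h1
    exact hnedf ((hmem_s _ hνP hin).trans (hmem_s _ hν'P h1).symm)
  obtain ⟨k1, hk1n, hk1ν, hk1ν', hgood1⟩ :=
    path_entry (satGraph c) hT0 hstep hνS (hTn _)
  have hk1k0 : k1 < k0 := by
    by_contra hcon
    push_neg at hcon
    exact hk1ν (path_mono (satGraph c) hstep hcon (le_of_lt hk1n) hν)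
  have hwk1 : (SatNode.w j0 : SatNode v m) ∉ T k1 := fun hmem =>
    hw (path_mono (satGraph c) hstep (by omega) hk0 hmem)
  by_cases hcase : ∃ p : Fin m × Fin 3, c p.1 p.2 = (i, b) ∧ s0 = SatNode.leafL p.1 p.2
  · obtain ⟨p, hp1, hp2⟩ := hcase
    have hν'S : (nodeOf i (!b) : SatNode v m) ∉ S := by
      intro hin
      have h1 := hmem_s _ hν'P hin
      rw [hp2] at h1
      cases b <;> simp [nodeOf] at h1
    obtain ⟨k2, hk2n, hk2ν', hk2ν'1, hgood2⟩ :=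
      path_entry (satGraph c) hT0 hstep hν'S (hTn _)
    have hνk2 : (nodeOf i b : SatNode v m) ∉ T k2 :=
      fun hin => hk2ν' (H k2 (by omega) hin)
    refine good_var_partner c hc (b := !b) ?_ ?_ hgood2
    · rw [Bool.not_not]
      exact hνk2
    · intro q hq hmem
      have hqS : (SatNode.leafL q.1 q.2 : SatNode v m) ∉ S := by
        intro hin
        have h1 := hmem_s _ (by simp [Pset, hq]) hin
        rw [hp2] at h1
        have hqp : q = p := leafL_injective h1
        rw [hqp, hp1] at hq
        cases b <;> simp at hq
      have h2 := leaf_stays c hT0 hstep hqS k2 (by omega) hmem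
      have hlit : litNode c q.1 q.2 = nodeOf i (!b) := (litNode_eq_nodeOf_iff c).mpr hq
      rw [hlit] at h2
      exact hk2ν' h2
  · push_neg at hcase
    refine good_var_wj c hc hj0 hwk1 ?_ hgood1
    intro q hq hmem
    have hqS : (SatNode.leafL q.1 q.2 : SatNode v m) ∉ S := by
      intro hin
      exact hcase q hq (hmem_s _ (by simp [Pset, hq]) hin).symm
    have h2 := leaf_stays c hT0 hstep hqS k1 (by omega) hmem
    have hlit : litNode c q.1 q.2 = nodeOf i b := (litNode_eq_nodeOf_iff c).mpr hq
    rw [hlit] at h2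
    exact hk1ν h2

end Path

end SatAux

open SatAux in
/-- If the majority game on the graph `G_I` associated to a 3-SAT instance with
`s−1 = v` variables and `m` clauses (each clause containing exactly three literals on
three distinct variables) admits a sufficient control set of size `s = v + 1`, then the
instance is satisfiable. -/
theorem sufficient_control_set_implies_sat
    (v m : ℕ) (c : Fin m → Fin 3 → Fin v × Bool)
    (hc : ∀ j, Function.Injective (fun t => (c j t).1))
    (S : Finset (SatNode v m)) (hcard : S.card = v + 1)
    (hS : SufficientControlSet (majU (satGraph c)) S) :
    ∃ σ : Fin v → Bool, ∀ j, ∃ t, σ (c j t).1 = (c j t).2 := by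
  classical
  obtain ⟨n, T, hT0, hTn, hstep⟩ := extract (satGraph c) hS
  have hQne : ((Qset : Finset (SatNode v m)) ∩ S).Nonempty := Q_nonempty c hT0 hTn hstep
  have hPne : ∀ i, ((Pset c i) ∩ S).Nonempty := fun i => P_nonempty c hc hT0 hTn hstep i
  have hdisj : ∀ o o' : Option (Fin v), o ≠ o' →
      Disjoint (Option.elim o Qset (Pset c)) (Option.elim o' Qset (Pset c)) := by
    intro o o' h
    match o, o' with
    | none, none => exact absurd rfl h
    | none, some i => exact (PQ_disjoint c i).symm
    | some i, none => exact PQ_disjoint c i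
    | some i, some i' =>
      exact PP_disjoint c (fun hii => h (by rw [hii]))
  have hne : ∀ o : Option (Fin v), ((Option.elim o Qset (Pset c)) ∩ S).Nonempty := by
    rintro (_ | i)
    · exact hQne
    · exact hPne i
  have hcard' : S.card = Fintype.card (Option (Fin v)) := by
    simp [hcard]
  obtain ⟨hone, hcover⟩ :=
    count_lemma (fun o : Option (Fin v) => Option.elim o Qset (Pset c)) S hdisj hne hcard'
  have hPone : ∀ i, ((Pset c i) ∩ S).card = 1 := fun i => hone (some i)
  have hwS : ∀ j, (SatNode.w j : SatNode v m) ∉ S := by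
    intro j hj
    obtain ⟨o, ho⟩ := hcover _ hj
    rcases o with _ | i
    · simp [Qset] at ho
    · simp [Pset] at ho
  refine ⟨fun i => decide (∃ k ≤ n, (SatNode.y i : SatNode v m) ∈ T k ∧
    (SatNode.ybar i : SatNode v m) ∉ T k), fun j => ?_⟩
  obtain ⟨k, hk, hwT, hwT1, hgood⟩ := path_entry (satGraph c) hT0 hstep (hwS j) (hTn _)
  obtain ⟨t, ht⟩ := good_w c hc hgood
  refine ⟨t, ?_⟩
  rcases hp : c j t with ⟨i, b⟩
  have hlit : litNode c j t = nodeOf i b := (litNode_eq_nodeOf_iff c).mpr hp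
  rw [hlit] at ht
  have hB := L1 c hc hT0 hTn hstep hPone (le_of_lt hk) ht ⟨t, hp⟩ hwT
  simp only [hp]
  cases b
  · exact decide_eq_false (before_excl c hstep (by simpa using hB))
  · exact decide_eq_true (by simpa using hB)
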